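/- Let d ∈ ℕ and 1 < q < ∞. For every Schwartz function u : ℝ^d → ℂ one has ‖⟨D⟩^{d/2 − d/q}u‖_2² ≤ ‖⟨D⟩^{d(1 − 1/q)}u‖_1 · ‖⟨D⟩^{−d/q}u‖_∞. -/

import Mathlib

open MeasureTheory Real SchwartzMap
open scoped FourierTransform ENNReal NNReal

open scoped ComplexConjugate RealInnerProductSpace
set_option maxHeartbeats 1000000
set_option synthInstance.maxHeartbeats 400000

variable {E : Type*} [NormedAddCommGroup E] [InnerProductSpace ℝ E]

noncomputable def gfun (r : ℝ) (ξ : E) : ℝ := (1 + ‖ξ‖ ^ 2) ^ (r / 2)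

lemma one_le_base (ξ : E) : (1:ℝ) ≤ 1 + ‖ξ‖ ^ 2 := le_add_of_nonneg_right (by positivity)

lemma base_pos (ξ : E) : (0:ℝ) < 1 + ‖ξ‖ ^ 2 := by positivity

lemma hasFDerivAt_gfun (r : ℝ) (ξ : E) :
    HasFDerivAt (gfun r) ((r * gfun (r - 2) ξ) • (innerSL ℝ ξ)) ξ := by
  have h1 : HasFDerivAt (fun ξ : E => 1 + ‖ξ‖ ^ 2) (2 • (innerSL ℝ ξ)) ξ := by
    simpa using ((hasFDerivAt_id ξ).norm_sq).const_add 1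
  have h2 : HasDerivAt (fun t : ℝ => t ^ (r / 2)) ((r / 2) * (1 + ‖ξ‖ ^ 2) ^ (r / 2 - 1))
      (1 + ‖ξ‖ ^ 2) := by
    simpa [mul_comm] using Real.hasDerivAt_rpow_const (p := r / 2) (Or.inl (base_pos ξ).ne')
  have := h2.comp_hasFDerivAt ξ h1
  refine this.congr_fderiv ?_
  ext y
  simp only [ContinuousLinearMap.smul_apply, ContinuousLinearMap.coe_smul', Pi.smul_apply,
    gfun, smul_eq_mul]
  have : (1 + ‖ξ‖ ^ 2) ^ (r / 2 - 1) = (1 + ‖ξ‖ ^ 2) ^ ((r - 2) / 2) := by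
    ring_nf
  rw [this]; ring

lemma contDiff_gfun (r : ℝ) : ContDiff ℝ ((⊤:ℕ∞) : WithTop ℕ∞) (gfun (E := E) r) := by
  rw [contDiff_iff_contDiffAt]
  intro ξ
  exact (contDiffAt_rpow_const_of_ne (base_pos ξ).ne').comp ξ
    ((contDiffAt_const.add (contDiffAt_id.norm_sq ℝ)))

lemma gfun_nonneg (r : ℝ) (ξ : E) : 0 ≤ gfun r ξ :=
  Real.rpow_nonneg (base_pos ξ).le _

lemma gfun_le (r : ℝ) (ξ : E) : gfun r ξ ≤ (1 + ‖ξ‖) ^ (⌈|r|⌉₊) := by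
  have h1 : (1:ℝ) ≤ 1 + ‖ξ‖ := le_add_of_nonneg_right (norm_nonneg ξ)
  rcases le_or_gt r 0 with hr | hr
  · calc gfun r ξ ≤ 1 :=
          Real.rpow_le_one_of_one_le_of_nonpos (one_le_base ξ) (by linarith)
      _ ≤ (1 + ‖ξ‖) ^ (⌈|r|⌉₊) := one_le_pow₀ h1
  · have h2 : (1 + ‖ξ‖ ^ 2 : ℝ) ≤ (1 + ‖ξ‖) ^ (2:ℕ) := by
      have := norm_nonneg ξ; nlinarith
    calc gfun r ξ ≤ ((1 + ‖ξ‖) ^ (2:ℕ)) ^ (r / 2) :=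
          Real.rpow_le_rpow (base_pos ξ).le h2 (by linarith)
      _ = (1 + ‖ξ‖) ^ ((2:ℝ) * (r / 2)) := by
          rw [← Real.rpow_natCast (1 + ‖ξ‖) 2, ← Real.rpow_mul (by linarith)]
          norm_num
      _ ≤ (1 + ‖ξ‖) ^ ((⌈|r|⌉₊ : ℝ)) := by
          apply Real.rpow_le_rpow_of_exponent_le h1
          rw [mul_div_cancel₀ _ (two_ne_zero)]
          exact (le_abs_self r).trans (Nat.le_ceil _)
      _ = (1 + ‖ξ‖) ^ (⌈|r|⌉₊) := Real.rpow_natCast _ _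

lemma gfun_bound : ∀ (n : ℕ) (r : ℝ), ∃ (k : ℕ) (C : ℝ), 0 ≤ C ∧
    ∀ i ≤ n, ∀ ξ : E, ‖iteratedFDeriv ℝ i (gfun r) ξ‖ ≤ C * (1 + ‖ξ‖) ^ k := by
  intro n
  induction n with
  | zero =>
    intro r
    refine ⟨⌈|r|⌉₊, 1, zero_le_one, ?_⟩
    intro i hi ξ
    interval_cases i
    rw [norm_iteratedFDeriv_zero, Real.norm_eq_abs, abs_of_nonneg (gfun_nonneg r ξ), one_mul]
    exact gfun_le r ξ
  | succ n IH =>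
    intro r
    obtain ⟨k₁, C₁, hC₁, h₁⟩ := IH r
    obtain ⟨k₂, C₂, hC₂, h₂⟩ := IH (r - 2)
    obtain ⟨k₃, C₃, hC₃, h₃⟩ :=
      (innerSL ℝ (E := E)).hasTemperateGrowth.norm_iteratedFDeriv_le_uniform n
    refine ⟨max k₁ (k₂ + k₃), C₁ + 2 ^ n * ((|r| * C₂) * C₃), by positivity, ?_⟩
    intro i hi ξ
    have h1 : (1:ℝ) ≤ 1 + ‖ξ‖ := le_add_of_nonneg_right (norm_nonneg ξ)
    rcases Nat.lt_or_ge i (n + 1) with hi' | hi'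
    · calc ‖iteratedFDeriv ℝ i (gfun r) ξ‖ ≤ C₁ * (1 + ‖ξ‖) ^ k₁ :=
            h₁ i (Nat.lt_succ_iff.mp hi') ξ
        _ ≤ (C₁ + 2 ^ n * ((|r| * C₂) * C₃)) * (1 + ‖ξ‖) ^ (max k₁ (k₂ + k₃)) := by
            apply mul_le_mul (le_add_of_nonneg_right (by positivity))
              (pow_le_pow_right₀ h1 (le_max_left _ _)) (by positivity) (by positivity)
    · have hieq : i = n + 1 := le_antisymm hi hi'
      subst hieq
      have hfd : fderiv ℝ (gfun r) = fun ξ : E => (r * gfun (r - 2) ξ) • (innerSL ℝ ξ) := by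
        funext ξ; exact (hasFDerivAt_gfun r ξ).fderiv
      have key : ‖iteratedFDeriv ℝ (n + 1) (gfun r) ξ‖
          = ‖iteratedFDeriv ℝ n (fun ξ : E => (r * gfun (r - 2) ξ) • (innerSL ℝ ξ)) ξ‖ := by
        rw [← norm_iteratedFDeriv_fderiv, hfd]
      rw [key]
      have hcd1 : ContDiff ℝ ((⊤:ℕ∞) : WithTop ℕ∞) (fun ξ : E => r * gfun (r - 2) ξ) :=
        contDiff_const.mul (contDiff_gfun (r - 2))
      have hcd2 : ContDiff ℝ ((⊤:ℕ∞) : WithTop ℕ∞) (fun ξ : E => innerSL ℝ (E := E) ξ) :=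
        (innerSL ℝ (E := E)).contDiff
      have hsmul := norm_iteratedFDeriv_smul_le hcd1 hcd2 ξ
        (n := n) (by exact_mod_cast le_top)
      refine hsmul.trans ?_
      have hterm : ∀ i ∈ Finset.range (n + 1),
          (n.choose i : ℝ) * ‖iteratedFDeriv ℝ i (fun ξ : E => r * gfun (r - 2) ξ) ξ‖ *
            ‖iteratedFDeriv ℝ (n - i) (fun ξ : E => innerSL ℝ (E := E) ξ) ξ‖
          ≤ (n.choose i : ℝ) * ((|r| * C₂) * C₃ * (1 + ‖ξ‖) ^ (k₂ + k₃)) := by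
        intro i hi2
        rw [Finset.mem_range, Nat.lt_succ_iff] at hi2
        have e1 : ‖iteratedFDeriv ℝ i (fun ξ : E => r * gfun (r - 2) ξ) ξ‖
            = |r| * ‖iteratedFDeriv ℝ i (gfun (r - 2)) ξ‖ := by
          have : (fun ξ : E => r * gfun (r - 2) ξ) = r • (gfun (r - 2)) := by
            funext x; simp [smul_eq_mul]
          rw [this, iteratedFDeriv_const_smul_apply ((contDiff_gfun (r-2)).contDiffAt.of_le (by exact_mod_cast le_top : ((i:ℕ∞) : WithTop ℕ∞) ≤ _)),
            ]
          rw [show |r| = ‖r‖ from (Real.norm_eq_abs r).symm]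
          exact norm_smul (β := ContinuousMultilinearMap ℝ (fun _ : Fin i => E) ℝ) r _
        rw [e1, pow_add]
        have b1 := h₂ i hi2 ξ
        have b2 := h₃ (n - i) (Nat.sub_le n i) ξ
        calc (n.choose i : ℝ) * (|r| * ‖iteratedFDeriv ℝ i (gfun (r - 2)) ξ‖) *
              ‖iteratedFDeriv ℝ (n - i) (fun ξ : E => innerSL ℝ (E := E) ξ) ξ‖
            ≤ (n.choose i : ℝ) * (|r| * (C₂ * (1 + ‖ξ‖) ^ k₂)) * (C₃ * (1 + ‖ξ‖) ^ k₃) := by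
              apply mul_le_mul _ b2 (norm_nonneg _) (by positivity)
              apply mul_le_mul_of_nonneg_left _ (Nat.cast_nonneg _)
              exact mul_le_mul_of_nonneg_left b1 (abs_nonneg r)
          _ = (n.choose i : ℝ) * ((|r| * C₂) * C₃ * ((1 + ‖ξ‖) ^ k₂ * (1 + ‖ξ‖) ^ k₃)) := by
              ring
      calc (∑ i ∈ Finset.range (n + 1),
              (n.choose i : ℝ) * ‖iteratedFDeriv ℝ i (fun ξ : E => r * gfun (r - 2) ξ) ξ‖ *
              ‖iteratedFDeriv ℝ (n - i) (fun ξ : E => innerSL ℝ (E := E) ξ) ξ‖)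
          ≤ ∑ i ∈ Finset.range (n + 1),
              (n.choose i : ℝ) * ((|r| * C₂) * C₃ * (1 + ‖ξ‖) ^ (k₂ + k₃)) :=
            Finset.sum_le_sum hterm
        _ = (∑ i ∈ Finset.range (n + 1), (n.choose i : ℝ)) *
              ((|r| * C₂) * C₃ * (1 + ‖ξ‖) ^ (k₂ + k₃)) := by
            rw [← Finset.sum_mul]
        _ = (2 ^ n : ℝ) * ((|r| * C₂) * C₃ * (1 + ‖ξ‖) ^ (k₂ + k₃)) := by
            norm_cast
            rw [Nat.sum_range_choose]
        _ ≤ (C₁ + 2 ^ n * ((|r| * C₂) * C₃)) * (1 + ‖ξ‖) ^ (max k₁ (k₂ + k₃)) := by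
            have := pow_le_pow_right₀ h1 (le_max_right k₁ (k₂ + k₃))
            calc (2 ^ n : ℝ) * ((|r| * C₂) * C₃ * (1 + ‖ξ‖) ^ (k₂ + k₃))
                = (2 ^ n * ((|r| * C₂) * C₃)) * (1 + ‖ξ‖) ^ (k₂ + k₃) := by ring
              _ ≤ (C₁ + 2 ^ n * ((|r| * C₂) * C₃)) * (1 + ‖ξ‖) ^ (max k₁ (k₂ + k₃)) :=
                  mul_le_mul (by linarith) this (by positivity) (by positivity)

lemma htg_gfun (r : ℝ) : Function.HasTemperateGrowth (gfun (E := E) r) := by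
  refine ⟨contDiff_gfun r, fun n => ?_⟩
  obtain ⟨k, C, hC, h⟩ := gfun_bound (E := E) n r
  exact ⟨k, C, fun x => h n le_rfl x⟩

lemma htg_mfun (r : ℝ) :
    Function.HasTemperateGrowth (fun ξ : E => ((gfun r ξ : ℝ) : ℂ)) := by
  refine ⟨Complex.ofRealCLM.contDiff.comp (contDiff_gfun r), fun n => ?_⟩
  obtain ⟨k, C, hC, h⟩ := gfun_bound (E := E) n r
  refine ⟨k, C, fun x => ?_⟩
  have : (fun ξ : E => ((gfun r ξ : ℝ) : ℂ)) = Complex.ofRealLI ∘ gfun r := rfl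
  rw [this, Complex.ofRealLI.norm_iteratedFDeriv_comp_left (contDiff_gfun r).contDiffAt (by exact_mod_cast le_top : ((n:ℕ∞) : WithTop ℕ∞) ≤ _)]
  exact h n le_rfl x
section Fourier

open scoped ComplexConjugate RealInnerProductSpace

variable {V : Type*} [NormedAddCommGroup V] [InnerProductSpace ℝ V]
  [FiniteDimensional ℝ V] [MeasurableSpace V] [BorelSpace V]

lemma conj_fourierIntegralInv (f : V → ℂ) (x : V) :
    conj ((𝓕⁻ f) x) = 𝓕 (fun ξ => conj (f ξ)) x := by
  rw [Real.fourierInv_eq', Real.fourier_eq', ← integral_conj]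
  congr 1
  funext v
  rw [smul_eq_mul, smul_eq_mul, map_mul, ← Complex.exp_conj]
  congr 1
  simp only [map_mul, Complex.conj_ofReal, Complex.conj_I]
  push_cast
  ring

/-- Parseval identity for Schwartz functions written via inverse Fourier integrals. -/
lemma parseval_schwartz (w w' : SchwartzMap V ℂ) :
    ∫ x, (𝓕⁻ ⇑w) x * conj ((𝓕⁻ ⇑w') x) = ∫ ξ, w ξ * conj (w' ξ) := by
  set v : SchwartzMap V ℂ := (FourierTransform.fourierCLE ℝ 𝓢(V, ℂ)).symm w with hv
  have hvc : ⇑v = 𝓕⁻ ⇑w := by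
    rw [hv, FourierTransform.fourierCLE_symm_apply, SchwartzMap.fourierInv_coe]
  have hwv : 𝓕 ⇑v = ⇑w := by
    rw [← SchwartzMap.fourier_coe, hv, FourierTransform.fourierCLE_symm_apply,
      FourierTransform.fourier_fourierInv_eq]
  have hconj : Integrable (fun ξ => conj (w' ξ)) volume :=
    Complex.conjCLE.toContinuousLinearMap.integrable_comp w'.integrable
  have key := VectorFourier.integral_fourierIntegral_smul_eq_flip
    (μ := volume) (ν := volume) (L := innerₗ V)
    Real.continuous_fourierChar continuous_inner hconj v.integrable
  rw [flip_innerₗ] at key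
  calc ∫ x, (𝓕⁻ ⇑w) x * conj ((𝓕⁻ ⇑w') x)
      = ∫ x, (𝓕 (fun ξ => conj (w' ξ)) x) • (v x) := by
        congr 1; funext x
        rw [conj_fourierIntegralInv, smul_eq_mul, mul_comm, hvc]
    _ = ∫ ξ, conj (w' ξ) • (𝓕 ⇑v ξ) := key
    _ = ∫ ξ, w ξ * conj (w' ξ) := by
        congr 1; funext ξ
        rw [hwv, smul_eq_mul, mul_comm]

end Fourier
section Main

open scoped ComplexConjugate

variable {V : Type*} [NormedAddCommGroup V] [InnerProductSpace ℝ V]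
  [FiniteDimensional ℝ V] [MeasurableSpace V] [BorelSpace V]

/-- Multiplication by the Bessel weight on the Fourier side, as a Schwartz map. -/
noncomputable def besselMul (r : ℝ) (u : SchwartzMap V ℂ) : SchwartzMap V ℂ :=
  SchwartzMap.bilinLeftCLM (ContinuousLinearMap.mul ℝ ℂ) (htg_mfun r)
    ((FourierTransform.fourierCLE ℝ 𝓢(V, ℂ)) u)

lemma besselMul_apply (r : ℝ) (u : SchwartzMap V ℂ) (ξ : V) :
    besselMul r u ξ = (((1 + ‖ξ‖ ^ 2) ^ (r / 2) : ℝ) : ℂ) * 𝓕 (⇑u) ξ := by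
  have h : besselMul r u ξ = ((FourierTransform.fourierCLE ℝ 𝓢(V, ℂ)) u) ξ * ((gfun r ξ : ℝ) : ℂ) := rfl
  rw [h]
  have h2 : ((FourierTransform.fourierCLE ℝ 𝓢(V, ℂ)) u) ξ = 𝓕 (⇑u) ξ := by
    rw [fourierTransformCLE_apply, SchwartzMap.fourier_coe]
  rw [h2, mul_comm]
  rfl

lemma besselMul_inv (r : ℝ) (u : SchwartzMap V ℂ) :
    (fun x => 𝓕⁻ (fun ξ => (((1 + ‖ξ‖ ^ 2) ^ (r / 2) : ℝ) : ℂ) * 𝓕 (⇑u) ξ) x)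
      = ⇑((FourierTransform.fourierCLE ℝ 𝓢(V, ℂ)).symm (besselMul r u)) := by
  rw [fourierTransformCLE_symm_apply, SchwartzMap.fourierInv_coe]
  rw [show (fun ξ : V => (((1 + ‖ξ‖ ^ 2) ^ (r / 2) : ℝ) : ℂ) * 𝓕 (⇑u) ξ)
      = ⇑(besselMul r u) from funext fun ξ => (besselMul_apply r u ξ).symm]

lemma schwartz_norm_sq_integrable (f : SchwartzMap V ℂ) :
    Integrable (fun x => ‖f x‖ ^ 2) volume := by
  have h := (f.integrable (μ := volume)).norm
  have hb : ∃ C, ∀ x, ‖‖f x‖‖ ≤ C :=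
    ⟨SchwartzMap.seminorm ℝ 0 0 f, fun x => by
      rw [norm_norm]; exact SchwartzMap.norm_le_seminorm ℝ f x⟩
  have h2 := h.bdd_mul (f.continuous.norm.aestronglyMeasurable) (Filter.Eventually.of_forall hb.choose_spec)
  simpa [pow_two] using h2

lemma eLpNorm_two_sq (f : SchwartzMap V ℂ) :
    eLpNorm ⇑f 2 volume ^ 2 = ENNReal.ofReal (∫ x, ‖f x‖ ^ 2) := by
  rw [eLpNorm_eq_lintegral_rpow_enorm_toReal two_ne_zero ENNReal.ofNat_ne_top,
    ← ENNReal.rpow_natCast _ 2, ← ENNReal.rpow_mul]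
  rw [ofReal_integral_eq_lintegral_ofReal (schwartz_norm_sq_integrable f)
    (Filter.Eventually.of_forall fun x => by positivity)]
  have h1 : ∀ x : V, ENNReal.ofReal (‖f x‖ ^ 2) = ‖f x‖ₑ ^ ((2 : ℝ≥0∞).toReal) := by
    intro x
    rw [ENNReal.toReal_ofNat, ENNReal.rpow_two, ENNReal.ofReal_pow (norm_nonneg _),
      ofReal_norm]
  simp_rw [h1]
  rw [ENNReal.toReal_ofNat]
  norm_num

lemma integral_mul_conj_self (f : SchwartzMap V ℂ) :
    ∫ x, f x * conj (f x) = (((∫ x, ‖f x‖ ^ 2) : ℝ) : ℂ) := by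
  rw [show (((∫ x, ‖f x‖ ^ 2) : ℝ) : ℂ) = RCLike.ofReal (K := ℂ) (∫ x, ‖f x‖ ^ 2) from rfl,
    ← integral_ofReal (f := fun x => ‖f x‖ ^ 2) (μ := (volume : Measure V)) (𝕜 := ℂ)]
  congr 1
  funext x
  rw [Complex.mul_conj]
  norm_cast
  rw [Complex.normSq_eq_norm_sq]
  rfl

lemma holder_one_top (f g : SchwartzMap V ℂ) :
    ENNReal.ofReal ((∫ x, f x * conj (g x)).re)
      ≤ eLpNorm ⇑f 1 volume * eLpNorm ⇑g ⊤ volume := by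
  have hbm : AEStronglyMeasurable (fun x => conj (g x)) (volume : Measure V) :=
    (Complex.continuous_conj.comp g.continuous).aestronglyMeasurable
  have hb : ∃ C, ∀ x, ‖conj (g x)‖ ≤ C :=
    ⟨SchwartzMap.seminorm ℝ 0 0 g, fun x => by
      rw [RCLike.norm_conj]; exact SchwartzMap.norm_le_seminorm ℝ g x⟩
  have hint : Integrable (fun x => f x * conj (g x)) volume :=
    ((f.integrable (μ := volume)).bdd_mul hbm (Filter.Eventually.of_forall hb.choose_spec)).congr
      (Filter.Eventually.of_forall fun x => mul_comm _ _)
  have hStop : eLpNormEssSup (⇑g) (volume : Measure V) ≠ ⊤ :=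
    (eLpNormEssSup_lt_top_of_ae_bound (C := SchwartzMap.seminorm ℝ 0 0 g)
      (Filter.Eventually.of_forall fun x => SchwartzMap.norm_le_seminorm ℝ g x)).ne
  calc ENNReal.ofReal ((∫ x, f x * conj (g x)).re)
      ≤ ENNReal.ofReal ‖∫ x, f x * conj (g x)‖ := by
        apply ENNReal.ofReal_le_ofReal
        exact Complex.re_le_norm _
    _ ≤ ENNReal.ofReal (∫ x, ‖f x * conj (g x)‖) :=
        ENNReal.ofReal_le_ofReal (norm_integral_le_integral_norm _)
    _ = ∫⁻ x, ‖f x * conj (g x)‖ₑ ∂volume :=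
        ofReal_integral_norm_eq_lintegral_enorm hint
    _ = ∫⁻ x, ‖f x‖ₑ * ‖g x‖ₑ ∂volume := by
        congr 1
        funext x
        rw [enorm_mul, RCLike.enorm_conj]
    _ ≤ ∫⁻ x, ‖f x‖ₑ * eLpNormEssSup (⇑g) volume ∂volume := by
        apply lintegral_mono_ae
        filter_upwards [ae_le_eLpNormEssSup (f := ⇑g) (μ := volume)] with x hx
        exact mul_le_mul_right hx _
    _ = (∫⁻ x, ‖f x‖ₑ ∂volume) * eLpNormEssSup (⇑g) volume :=
        lintegral_mul_const' _ _ hStop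
    _ = eLpNorm ⇑f 1 volume * eLpNorm ⇑g ⊤ volume := by
        rw [eLpNorm_one_eq_lintegral_enorm, eLpNorm_exponent_top]

end Main


/-- The Cauchy-Schwarz/Plancherel estimate `‖⟨D⟩^{d/2-d/q}u‖₂² ≤ ‖⟨D⟩^{d/q'}u‖₁ ‖⟨D⟩^{-d/q}u‖_∞`
(inequality `eq:interpol0`). -/
theorem bessel_l2_interpolation
    (d : ℕ) (hd : 1 ≤ d) (q : ℝ) (hq1 : 1 < q)
    (u : SchwartzMap (EuclideanSpace ℝ (Fin d)) ℂ) :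
    eLpNorm (fun x => 𝓕⁻ (fun ξ =>
        (((1 + ‖ξ‖ ^ 2) ^ ((d / 2 - d / q) / 2) : ℝ) : ℂ) * 𝓕 (⇑u) ξ) x) 2 volume ^ 2 ≤
      eLpNorm (fun x => 𝓕⁻ (fun ξ =>
        (((1 + ‖ξ‖ ^ 2) ^ ((d * (1 - 1 / q)) / 2) : ℝ) : ℂ) * 𝓕 (⇑u) ξ) x) 1 volume *
      eLpNorm (fun x => 𝓕⁻ (fun ξ =>
        (((1 + ‖ξ‖ ^ 2) ^ ((-(d / q)) / 2) : ℝ) : ℂ) * 𝓕 (⇑u) ξ) x) ⊤ volume := by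
  set E := EuclideanSpace ℝ (Fin d)
  set s : ℝ := (d : ℝ) / 2 - (d : ℝ) / q with hs
  set a : ℝ := (d : ℝ) * (1 - 1 / q) with ha
  set b : ℝ := -((d : ℝ) / q) with hb
  rw [besselMul_inv s u, besselMul_inv a u, besselMul_inv b u]
  set A := (FourierTransform.fourierCLE ℝ 𝓢(E, ℂ)).symm (besselMul s u) with hA
  set F := (FourierTransform.fourierCLE ℝ 𝓢(E, ℂ)).symm (besselMul a u) with hF
  set G := (FourierTransform.fourierCLE ℝ 𝓢(E, ℂ)).symm (besselMul b u) with hG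
  have e1 : eLpNorm ⇑A 2 volume ^ 2 = ENNReal.ofReal ((∫ x, A x * conj (A x)).re) := by
    rw [eLpNorm_two_sq, integral_mul_conj_self, Complex.ofReal_re]
  have hexp : ∀ ξ : E, besselMul s u ξ * conj (besselMul s u ξ)
      = besselMul a u ξ * conj (besselMul b u ξ) := by
    intro ξ
    rw [besselMul_apply, besselMul_apply, besselMul_apply]
    rw [map_mul, map_mul, Complex.conj_ofReal, Complex.conj_ofReal]
    have hr : ((1 + ‖ξ‖ ^ 2 : ℝ) ^ (s / 2)) * ((1 + ‖ξ‖ ^ 2 : ℝ) ^ (s / 2))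
        = ((1 + ‖ξ‖ ^ 2 : ℝ) ^ (a / 2)) * ((1 + ‖ξ‖ ^ 2 : ℝ) ^ (b / 2)) := by
      rw [← Real.rpow_add (base_pos ξ), ← Real.rpow_add (base_pos ξ)]
      congr 1
      rw [hs, ha, hb]
      ring
    calc (((1 + ‖ξ‖ ^ 2 : ℝ) ^ (s / 2) : ℝ) : ℂ) * 𝓕 (⇑u) ξ *
          ((((1 + ‖ξ‖ ^ 2 : ℝ) ^ (s / 2) : ℝ) : ℂ) * conj (𝓕 (⇑u) ξ))
        = ((((1 + ‖ξ‖ ^ 2 : ℝ) ^ (s / 2)) * ((1 + ‖ξ‖ ^ 2 : ℝ) ^ (s / 2)) : ℝ) : ℂ)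
            * (𝓕 (⇑u) ξ * conj (𝓕 (⇑u) ξ)) := by push_cast; ring
      _ = ((((1 + ‖ξ‖ ^ 2 : ℝ) ^ (a / 2)) * ((1 + ‖ξ‖ ^ 2 : ℝ) ^ (b / 2)) : ℝ) : ℂ)
            * (𝓕 (⇑u) ξ * conj (𝓕 (⇑u) ξ)) := by rw [hr]
      _ = (((1 + ‖ξ‖ ^ 2 : ℝ) ^ (a / 2) : ℝ) : ℂ) * 𝓕 (⇑u) ξ *
          ((((1 + ‖ξ‖ ^ 2 : ℝ) ^ (b / 2) : ℝ) : ℂ) * conj (𝓕 (⇑u) ξ)) := by push_cast; ring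
  have e2 : ∫ x, A x * conj (A x) = ∫ x, F x * conj (G x) := by
    have hAc : ⇑A = 𝓕⁻ ⇑(besselMul s u) := by
        rw [hA, FourierTransform.fourierCLE_symm_apply, SchwartzMap.fourierInv_coe]
    have hFc : ⇑F = 𝓕⁻ ⇑(besselMul a u) := by
        rw [hF, FourierTransform.fourierCLE_symm_apply, SchwartzMap.fourierInv_coe]
    have hGc : ⇑G = 𝓕⁻ ⇑(besselMul b u) := by
        rw [hG, FourierTransform.fourierCLE_symm_apply, SchwartzMap.fourierInv_coe]
    calc ∫ x, A x * conj (A x)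
        = ∫ x, (𝓕⁻ ⇑(besselMul s u)) x * conj ((𝓕⁻ ⇑(besselMul s u)) x) := by rw [hAc]
      _ = ∫ ξ, besselMul s u ξ * conj (besselMul s u ξ) := parseval_schwartz _ _
      _ = ∫ ξ, besselMul a u ξ * conj (besselMul b u ξ) := by
          exact integral_congr_ae (Filter.Eventually.of_forall hexp)
      _ = ∫ x, (𝓕⁻ ⇑(besselMul a u)) x * conj ((𝓕⁻ ⇑(besselMul b u)) x) :=
          (parseval_schwartz _ _).symm
      _ = ∫ x, F x * conj (G x) := by rw [← hFc, ← hGc]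
  rw [e1, e2]
  exact holder_one_top F G
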